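/- Let (V,P) be a finite pseudoforest. Then P can be partitioned into a forest and a matching M such that M contains exactly one edge from each cycle of (V,P). -/

import Mathlib

open SimpleGraph

/-- A simple graph is a pseudoforest if every connected component contains at most one
cycle, i.e., any two cycles lying in the same connected component have the same edges. -/
def GraphIsPseudoforest {V : Type*} (H : SimpleGraph V) : Prop :=
  ∀ ⦃u v : V⦄ (c : H.Walk u u) (d : H.Walk v v),
    c.IsCycle → d.IsCycle → H.Reachable u v → ∀ e : Sym2 V, e ∈ c.edges ↔ e ∈ d.edges

/-- A set of edges is a matching if no two of its edges share an endpoint. -/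
def IsMatchingSet {V : Type*} (M : Set (Sym2 V)) : Prop :=
  ∀ e ∈ M, ∀ f ∈ M, e ≠ f → ∀ v : V, v ∈ e → v ∉ f

/-- A finite pseudoforest `(V, P)` can be partitioned into a forest and a matching `M`
such that `M` contains exactly one edge from each cycle of `(V, P)`. -/
theorem pseudoforest_partition_forest_matching {V : Type*} [Fintype V] [DecidableEq V]
    (P : SimpleGraph V) (hP : GraphIsPseudoforest P) :
    ∃ M ⊆ P.edgeSet, IsMatchingSet M ∧
      (SimpleGraph.fromEdgeSet (P.edgeSet \ M)).IsAcyclic ∧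
      ∀ ⦃u : V⦄ (c : P.Walk u u), c.IsCycle → ∃! e : Sym2 V, e ∈ c.edges ∧ e ∈ M := by
  classical
  -- the set of edges of a cycle is nonempty
  have hne : ∀ {u : V} (c : P.Walk u u), c.IsCycle →
      ({f | f ∈ c.edges} : Set (Sym2 V)).Nonempty := by
    intro u c hc
    have h3 := hc.three_le_length
    cases he : c.edges with
    | nil =>
      have := c.length_edges
      rw [he] at this
      simp at this
      omega
    | cons a l => exact ⟨a, by simp only [Set.mem_setOf_eq, he]; exact List.mem_cons_self⟩
  -- choose one edge per cycle, depending only on the edge set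
  set pick : ∀ {u : V} (c : P.Walk u u), c.IsCycle → Sym2 V :=
    fun {u} c hc => (hne c hc).choose
  have pick_mem : ∀ {u : V} (c : P.Walk u u) (hc : c.IsCycle), pick c hc ∈ c.edges :=
    fun {u} c hc => (hne c hc).choose_spec
  have choose_congr : ∀ (E₁ E₂ : Set (Sym2 V)) (h1 : E₁.Nonempty) (h2 : E₂.Nonempty),
      E₁ = E₂ → h1.choose = h2.choose := by
    rintro E _ h1 h2 rfl; rfl
  -- membership of a vertex of an edge of a walk in its support
  have supp : ∀ {u : V} (p : P.Walk u u) (e : Sym2 V), e ∈ p.edges →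
      ∀ w ∈ e, w ∈ p.support := by
    intro u p e he w hw
    induction e using Sym2.ind with
    | _ x y =>
      rcases Sym2.mem_iff.mp hw with rfl | rfl
      · exact p.fst_mem_support_of_mem_edges he
      · exact p.snd_mem_support_of_mem_edges he
  -- reachability from a vertex on a cycle
  have reach : ∀ {u v : V} (c : P.Walk u u), v ∈ c.support → P.Reachable u v := by
    intro u v c hv
    exact ⟨c.takeUntil v hv⟩
  -- cycles in the same component pick the same edge
  have pick_congr : ∀ {u v : V} (c : P.Walk u u) (d : P.Walk v v)
      (hc : c.IsCycle) (hd : d.IsCycle), P.Reachable u v → pick c hc = pick d hd := by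
    intro u v c d hc hd hr
    exact choose_congr _ _ (hne c hc) (hne d hd)
      (Set.ext fun e => hP c d hc hd hr e)
  set M : Set (Sym2 V) := {e | ∃ (u : V) (c : P.Walk u u) (hc : c.IsCycle), e = pick c hc}
    with hM
  -- membership in M and on a cycle forces being the picked edge of that cycle
  have key : ∀ {u : V} (c : P.Walk u u) (hc : c.IsCycle) (e : Sym2 V),
      e ∈ M → e ∈ c.edges → e = pick c hc := by
    rintro u c hc e ⟨v, d, hd, rfl⟩ hec
    -- pick d hd ∈ d.edges and ∈ c.edges, so cycles share a vertex
    obtain ⟨x, hx⟩ : ∃ x, x ∈ pick d hd := ⟨(pick d hd).out.1, Sym2.out_fst_mem _⟩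
    have hxc : x ∈ c.support := supp c _ hec x hx
    have hxd : x ∈ d.support := supp d _ (pick_mem d hd) x hx
    have hr : P.Reachable u v := (reach c hxc).trans (reach d hxd).symm
    exact (pick_congr c d hc hd hr).symm
  refine ⟨M, ?_, ?_, ?_, ?_⟩
  · rintro e ⟨u, c, hc, rfl⟩
    exact c.edges_subset_edgeSet (pick_mem c hc)
  · rintro e ⟨u, c, hc, rfl⟩ f ⟨v, d, hd, rfl⟩ hne' w hwe hwf
    apply hne'
    -- w lies on both cycles, so they are in the same component
    have hwc : w ∈ c.support := supp c _ (pick_mem c hc) w hwe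
    have hwd : w ∈ d.support := supp d _ (pick_mem d hd) w hwf
    exact pick_congr c d hc hd ((reach c hwc).trans (reach d hwd).symm)
  · intro u c hc
    -- transfer the cycle to P
    have hsub : ∀ e ∈ c.edges, e ∈ P.edgeSet := by
      intro e he
      have := c.edges_subset_edgeSet he
      rw [edgeSet_fromEdgeSet] at this
      exact this.1.1
    have hc' : (c.transfer P hsub).IsCycle := hc.transfer hsub
    have hmem : pick (c.transfer P hsub) hc' ∈ c.edges := by
      have := pick_mem (c.transfer P hsub) hc'
      rwa [Walk.edges_transfer] at this
    have hM' : pick (c.transfer P hsub) hc' ∈ M := ⟨u, _, hc', rfl⟩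
    have := c.edges_subset_edgeSet hmem
    rw [edgeSet_fromEdgeSet] at this
    exact this.1.2 hM'
  · intro u c hc
    refine ⟨pick c hc, ⟨pick_mem c hc, ⟨u, c, hc, rfl⟩⟩, ?_⟩
    rintro e ⟨hec, heM⟩
    exact key c hc e heM hec
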